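/- (Exponential moments of meeting times, uniformly in the perturbation) Let A be a transition matrix on S whose induced chain is uniformly ergodic, and let γ ∈ (0,1). Then for every ε > 0 there exists β̃ > 0, depending only on A, γ and ε, such that for every transition matrix B with B ⪰_γ A the following holds: let X and Y be two independent copies of the Markov chain on S with transition matrix B, and let T := inf{t ≥ 0 : X_t = Y_t} be their first meeting time. Then sup_{x,y∈S} E_{xy}[e^{βT}] ≤ 1 + ε for all β ∈ [0, β̃], where E_{xy} denotes expectation conditional on X_0 = x and Y_0 = y. -/

import Mathlib

open MeasureTheory Finset
open scoped ENNReal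

noncomputable section

namespace DiscreteEBSDE

/-- A column-stochastic transition matrix on a finite state space. -/
def IsTransMat {S : Type*} [Fintype S] (B : Matrix S S ℝ) : Prop :=
  (∀ i j, 0 ≤ B i j) ∧ ∀ j, ∑ i, B i j = 1

/-- A probability vector on a finite state space. -/
def IsProbVec {S : Type*} [Fintype S] (μ : S → ℝ) : Prop :=
  (∀ i, 0 ≤ μ i) ∧ ∑ i, μ i = 1

/-- Total variation distance between measures on a finite state space. -/
def tvDist {S : Type*} [Fintype S] (μ ν : S → ℝ) : ℝ := (∑ x, |μ x - ν x|) / 2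

/-- The chain induced by the column-stochastic matrix `B` is uniformly ergodic:
`B^t μ → π` in total variation, at exponential rate, uniformly in the initial law `μ`. -/
def UniformlyErgodic {S : Type*} [Fintype S] [DecidableEq S] (B : Matrix S S ℝ) : Prop :=
  ∃ π : S → ℝ, IsProbVec π ∧ ∃ R ρ : ℝ, 0 < R ∧ 0 < ρ ∧
    ∀ (t : ℕ) (μ : S → ℝ), IsProbVec μ →
      tvDist ((B ^ t).mulVec μ) π ≤ R * Real.exp (-ρ * t)

/-- `(X, Y)` is (under `μ`) a pair of independent copies of the Markov chain with
column-stochastic transition matrix `B`: the Markov property on path cylinders, with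
product transition probabilities. -/
def IsPairChain {S : Type*} {Ω : Type*} [MeasurableSpace Ω] (B : Matrix S S ℝ)
    (μ : Measure Ω) (X Y : ℕ → Ω → S) : Prop :=
  ∀ (t : ℕ) (w v : ℕ → S) (i k : S),
    μ ({ω | X (t + 1) ω = i ∧ Y (t + 1) ω = k} ∩
        {ω | ∀ s ≤ t, X s ω = w s ∧ Y s ω = v s}) =
      ENNReal.ofReal (B i (w t) * B k (v t)) *
        μ {ω | ∀ s ≤ t, X s ω = w s ∧ Y s ω = v s}

/-- The first meeting time of `X` and `Y` at or after time `t₀`, valued in `ℕ∞`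
(`⊤` if they never meet). -/
def meetTime {S : Type*} {Ω : Type*} (X Y : ℕ → Ω → S) (t₀ : ℕ) (ω : Ω) : ℕ∞ :=
  sInf {n : ℕ∞ | ∃ t : ℕ, n = (t : ℕ∞) ∧ t₀ ≤ t ∧ X t ω = Y t ω}

/-- `e^{β T}` for `T : ℕ∞`, equal to `∞` when `T = ∞`. -/
def expVal (β : ℝ) : ℕ∞ → ℝ≥0∞ :=
  WithTop.recTopCoe ⊤ fun m : ℕ => ENNReal.ofReal (Real.exp (β * m))

/-- `j` leads to `i` for the chain with column-stochastic matrix `B`. -/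
def Leads {S : Type*} [Fintype S] [DecidableEq S] (B : Matrix S S ℝ) (j i : S) : Prop :=
  ∃ n : ℕ, 0 < (B ^ n) i j

/-- Two states communicate if each leads to the other. -/
def Communicates {S : Type*} [Fintype S] [DecidableEq S] (B : Matrix S S ℝ)
    (i j : S) : Prop :=
  Leads B i j ∧ Leads B j i

/-- `C` is a communicating class of the chain `B`. -/
def IsCommClass {S : Type*} [Fintype S] [DecidableEq S] (B : Matrix S S ℝ)
    (C : Set S) : Prop :=
  C.Nonempty ∧ ∀ i ∈ C, ∀ j, j ∈ C ↔ Communicates B i j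

/-- `C` is a closed communicating class of the chain `B`. -/
def IsClosedCommClass {S : Type*} [Fintype S] [DecidableEq S] (B : Matrix S S ℝ)
    (C : Set S) : Prop :=
  IsCommClass B C ∧ ∀ j ∈ C, ∀ i, Leads B j i → i ∈ C

/-- The chain `B` is aperiodic: every state in a closed communicating class has
period `1` (every common divisor of its return times is `1`). -/
def AperiodicChain {S : Type*} [Fintype S] [DecidableEq S] (B : Matrix S S ℝ) : Prop :=
  ∀ i : S, (∃ C : Set S, IsClosedCommClass B C ∧ i ∈ C) →
    ∀ d : ℕ, (∀ n : ℕ, 1 ≤ n → 0 < (B ^ n) i i → d ∣ n) → d = 1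

/-- The Nummelin split matrix `𝓑` on the split space `S × Bool` (second coordinate
`true` is the layer `S₁`): columns from `S₀` follow `C = (1-γ)⁻¹(B - γA)`, columns from
`S₁` follow `A`, and the result is split between the layers with masses `1-γ` and `γ`. -/
def splitMatrix {N : ℕ} (γ : ℝ) (A B : Matrix (Fin N) (Fin N) ℝ) :
    Matrix (Fin N × Bool) (Fin N × Bool) ℝ := fun p q =>
  (if p.2 then γ else 1 - γ) *
    (if q.2 then A p.1 q.1 else (1 - γ)⁻¹ * (B p.1 q.1 - γ * A p.1 q.1))

lemma pow_entry_nonneg {N : ℕ} (B : Matrix (Fin N) (Fin N) ℝ)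
    (hB : ∀ i j, 0 ≤ B i j) (n : ℕ) : ∀ i j, 0 ≤ (B ^ n) i j := by
  induction n with
  | zero => intro i j; rw [pow_zero]; rw [Matrix.one_apply]; positivity
  | succ n ih =>
      intro i j
      rw [pow_succ, Matrix.mul_apply]
      exact Finset.sum_nonneg fun a _ => mul_nonneg (ih i a) (hB a j)

lemma pow_entry_ge {N : ℕ} (A B : Matrix (Fin N) (Fin N) ℝ) (γ : ℝ) (hγ : 0 ≤ γ)
    (hA : ∀ i j, 0 ≤ A i j) (hB : ∀ i j, 0 ≤ B i j)
    (hAB : ∀ i j, γ * A i j ≤ B i j) (m : ℕ) :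
    ∀ i j, γ ^ m * (A ^ m) i j ≤ (B ^ m) i j := by
  induction m with
  | zero => intro i j; simp
  | succ m ih =>
      intro i j
      simp only [pow_succ, Matrix.mul_apply]
      rw [Finset.mul_sum]
      apply Finset.sum_le_sum
      intro a _
      have h1 : γ ^ m * γ * ((A ^ m) i a * A a j)
          = (γ ^ m * (A ^ m) i a) * (γ * A a j) := by ring
      rw [h1]
      exact mul_le_mul (ih i a) (hAB a j) (mul_nonneg hγ (hA a j))
        (pow_entry_nonneg B hB m i a)

lemma exists_pos_column {N : ℕ} (A : Matrix (Fin N) (Fin N) ℝ)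
    (hA : IsTransMat A) (hAerg : UniformlyErgodic A) :
    ∃ (m : ℕ) (i₀ : Fin N) (c : ℝ), 1 ≤ m ∧ 0 < c ∧ c ≤ 1 ∧ ∀ j, c ≤ (A ^ m) i₀ j := by
  obtain ⟨π, hπ, R, ρ, hR, hρ, herg⟩ := hAerg
  have hN : 0 < N := by
    rcases Nat.eq_zero_or_pos N with h | h
    · exfalso; subst h; simpa using hπ.2
    · exact h
  have hNR : (0:ℝ) < N := by exact_mod_cast hN
  -- choose i₀ with π i₀ ≥ 1/N
  obtain ⟨i₀, -, hi₀⟩ : ∃ i ∈ Finset.univ, (1:ℝ)/N ≤ π i := by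
    apply Finset.exists_le_of_sum_le
    · exact Finset.univ_nonempty_iff.mpr ⟨⟨0, hN⟩⟩
    · rw [Finset.sum_const, hπ.2]
      simp only [Finset.card_univ, Fintype.card_fin, nsmul_eq_mul]
      rw [mul_one_div, div_self (ne_of_gt hNR)]
  -- choose m with R * exp(-ρ)^m ≤ 1/(4N)
  set r : ℝ := Real.exp (-ρ) with hr
  have hr0 : 0 ≤ r := Real.exp_nonneg _
  have hr1 : r < 1 := Real.exp_lt_one_iff.mpr (by linarith)
  obtain ⟨n, hn⟩ := exists_pow_lt_of_lt_one (show (0:ℝ) < 1/(4*N*R) by positivity) hr1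
  set m : ℕ := n + 1 with hm
  have hrm : R * r ^ m ≤ 1 / (4*N) := by
    have h1 : r ^ m ≤ r ^ n := pow_le_pow_of_le_one hr0 hr1.le (Nat.le_succ n)
    have h2 : r ^ m < 1/(4*N*R) := lt_of_le_of_lt h1 hn
    have h3 : R * r ^ m < R * (1/(4*N*R)) :=
      mul_lt_mul_of_pos_left h2 hR
    have h4 : R * (1/(4*N*R)) = 1/(4*N) := by field_simp
    linarith
  refine ⟨m, i₀, 1/(2*N), Nat.le_add_left 1 n, by positivity, ?_, ?_⟩
  · rw [div_le_one (by positivity)]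
    have : (1:ℝ) ≤ N := by exact_mod_cast hN
    linarith
  intro j
  -- the point mass at j
  set μ : Fin N → ℝ := fun i => if i = j then 1 else 0 with hμ
  have hμp : IsProbVec μ := by
    constructor
    · intro i; dsimp [μ]; split <;> norm_num
    · simp [μ]
  have hcol : (A ^ m).mulVec μ i₀ = (A ^ m) i₀ j := by
    simp [Matrix.mulVec, dotProduct, μ, mul_ite]
  have htv := herg m μ hμp
  have hexp : Real.exp (-ρ * m) = r ^ m := by
    rw [hr, ← Real.exp_nat_mul]; ring_nf
  rw [hexp] at htv
  have habs : |(A ^ m).mulVec μ i₀ - π i₀| ≤ 2 * tvDist ((A ^ m).mulVec μ) π := by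
    rw [tvDist]
    have := Finset.single_le_sum (f := fun x => |(A ^ m).mulVec μ x - π x|)
      (fun x _ => abs_nonneg _) (Finset.mem_univ i₀)
    linarith
  have : |(A ^ m) i₀ j - π i₀| ≤ 1/(2*N) := by
    rw [hcol] at habs
    have h7 : tvDist ((A ^ m).mulVec μ) π ≤ 1/(4*N) := le_trans htv hrm
    have h8 : 2 * (1/(4*(N:ℝ))) = 1/(2*N) := by field_simp; ring
    linarith
  have h5 : π i₀ - 1/(2*N) ≤ (A ^ m) i₀ j := by
    have := abs_le.mp this
    linarith [this.1]
  have h6 : 1/(2*N) ≤ π i₀ - 1/(2*N) := by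
    have : (1:ℝ)/N = 1/(2*N) + 1/(2*N) := by field_simp; ring
    linarith
  linarith


section chain

variable {N : ℕ} {Ω : Type} [MeasurableSpace Ω] (X Y : ℕ → Ω → Fin N)

/-- Path cylinder up to time `t`. -/
def cyl (w v : ℕ → Fin N) (t : ℕ) : Set Ω :=
  {ω | ∀ s ≤ t, X s ω = w s ∧ Y s ω = v s}

lemma measurable_cyl (hX : ∀ t i, MeasurableSet {ω | X t ω = i})
    (hY : ∀ t i, MeasurableSet {ω | Y t ω = i}) (w v : ℕ → Fin N) (t : ℕ) :
    MeasurableSet (cyl X Y w v t) := by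
  have : cyl X Y w v t =
      ⋂ (s : ℕ) (_ : s ≤ t), ({ω | X s ω = w s} ∩ {ω | Y s ω = v s}) := by
    ext ω; simp [cyl]
  rw [this]
  exact MeasurableSet.iInter fun s => MeasurableSet.iInter fun _ =>
    (hX s (w s)).inter (hY s (v s))

lemma cyl_update (w v : ℕ → Fin N) (t : ℕ) (a b : Fin N) :
    cyl X Y (Function.update w (t+1) a) (Function.update v (t+1) b) (t+1) =
      {ω | X (t+1) ω = a ∧ Y (t+1) ω = b} ∩ cyl X Y w v t := by
  ext ω
  simp only [cyl, Set.mem_setOf_eq, Set.mem_inter_iff]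
  constructor
  · intro h
    refine ⟨?_, fun s hs => ?_⟩
    · have := h (t+1) le_rfl
      rwa [Function.update_self, Function.update_self] at this
    · have := h s (le_trans hs (Nat.le_succ t))
      rwa [Function.update_of_ne (by omega), Function.update_of_ne (by omega)] at this
  · rintro ⟨⟨hx, hy⟩, h⟩ s hs
    rcases Nat.le_add_one_iff.mp hs with hs' | hs'
    · rw [Function.update_of_ne (by omega), Function.update_of_ne (by omega)]
      exact h s hs'
    · subst hs'
      rw [Function.update_self, Function.update_self]
      exact ⟨hx, hy⟩

/-- n-step transition probabilities from a cylinder. -/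
lemma nstep {B : Matrix (Fin N) (Fin N) ℝ} (hB : IsTransMat B) (μ : Measure Ω)
    (hchain : IsPairChain B μ X Y)
    (hX : ∀ t i, MeasurableSet {ω | X t ω = i})
    (hY : ∀ t i, MeasurableSet {ω | Y t ω = i}) :
    ∀ (n t : ℕ) (w v : ℕ → Fin N) (i k : Fin N),
    μ ({ω | X (t+n) ω = i ∧ Y (t+n) ω = k} ∩ cyl X Y w v t)
      = ENNReal.ofReal ((B^n) i (w t) * (B^n) k (v t)) * μ (cyl X Y w v t) := by
  intro n
  induction n with
  | zero =>
      intro t w v i k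
      rcases eq_or_ne i (w t) with h1 | h1
      · rcases eq_or_ne k (v t) with h2 | h2
        · have hset : {ω | X (t+0) ω = i ∧ Y (t+0) ω = k} ∩ cyl X Y w v t
              = cyl X Y w v t := by
            apply Set.inter_eq_right.mpr
            intro ω hω
            exact ⟨by rw [h1]; exact (hω t le_rfl).1, by rw [h2]; exact (hω t le_rfl).2⟩
          rw [hset, pow_zero, h1, h2, Matrix.one_apply_eq, Matrix.one_apply_eq]
          norm_num
        · have hset : {ω | X (t+0) ω = i ∧ Y (t+0) ω = k} ∩ cyl X Y w v t = ∅ := by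
            ext ω
            simp only [Set.mem_inter_iff, Set.mem_setOf_eq, Set.mem_empty_iff_false,
              iff_false, not_and]
            rintro ⟨hx, hy⟩ hω
            exact h2 (hy ▸ (hω t le_rfl).2.symm ▸ rfl)
          rw [hset, pow_zero, Matrix.one_apply_ne h2]
          simp
      · have hset : {ω | X (t+0) ω = i ∧ Y (t+0) ω = k} ∩ cyl X Y w v t = ∅ := by
          ext ω
          simp only [Set.mem_inter_iff, Set.mem_setOf_eq, Set.mem_empty_iff_false,
            iff_false, not_and]
          rintro ⟨hx, hy⟩ hω
          exact h1 (hx ▸ (hω t le_rfl).1.symm ▸ rfl)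
        rw [hset, pow_zero, Matrix.one_apply_ne h1]
        simp
  | succ n ih =>
      intro t w v i k
      have hTT : t + (n+1) = (t+1) + n := by omega
      rw [hTT]
      set E : Set Ω := {ω | X ((t+1)+n) ω = i ∧ Y ((t+1)+n) ω = k} with hE
      have hunion : E ∩ cyl X Y w v t = ⋃ p : Fin N × Fin N,
          (E ∩ cyl X Y (Function.update w (t+1) p.1) (Function.update v (t+1) p.2) (t+1)) := by
        ext ω
        simp only [Set.mem_iUnion, Set.mem_inter_iff]
        constructor
        · rintro ⟨hω, hc⟩
          refine ⟨(X (t+1) ω, Y (t+1) ω), hω, ?_⟩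
          rw [cyl_update]
          exact ⟨⟨rfl, rfl⟩, hc⟩
        · rintro ⟨p, hω, hc⟩
          rw [cyl_update] at hc
          exact ⟨hω, hc.2⟩
      have hmeasE : MeasurableSet E := by
        have : E = {ω | X ((t+1)+n) ω = i} ∩ {ω | Y ((t+1)+n) ω = k} := by
          ext ω; simp [hE]
        rw [this]; exact (hX _ _).inter (hY _ _)
      have hdisj : Pairwise (Function.onFun Disjoint (fun p : Fin N × Fin N =>
          E ∩ cyl X Y (Function.update w (t+1) p.1) (Function.update v (t+1) p.2) (t+1))) := by
        intro p q hpq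
        rw [Function.onFun]
        rw [Set.disjoint_left]
        rintro ω ⟨-, hc1⟩ ⟨-, hc2⟩
        rw [cyl_update] at hc1 hc2
        apply hpq
        have h1 := hc1.1; have h2 := hc2.1
        ext
        · rw [← h1.1, ← h2.1]
        · rw [← h1.2, ← h2.2]
      have hμu : μ (E ∩ cyl X Y w v t) = ∑ p : Fin N × Fin N,
          μ (E ∩ cyl X Y (Function.update w (t+1) p.1) (Function.update v (t+1) p.2) (t+1)) := by
        rw [hunion, measure_iUnion hdisj (fun p => hmeasE.inter (measurable_cyl X Y hX hY _ _ _)),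
          tsum_fintype]
      rw [hμu]
      have hterm : ∀ p : Fin N × Fin N,
          μ (E ∩ cyl X Y (Function.update w (t+1) p.1) (Function.update v (t+1) p.2) (t+1))
          = ENNReal.ofReal (((B^n) i p.1 * B p.1 (w t)) * ((B^n) k p.2 * B p.2 (v t)))
              * μ (cyl X Y w v t) := by
        intro p
        have h1 := ih (t+1) (Function.update w (t+1) p.1) (Function.update v (t+1) p.2) i k
        rw [hE]
        rw [h1]
        rw [Function.update_self, Function.update_self]
        rw [cyl_update]
        have h2 := hchain t w v p.1 p.2
        rw [show {ω : Ω | ∀ s ≤ t, X s ω = w s ∧ Y s ω = v s} = cyl X Y w v t from rfl] at h2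
        rw [h2]
        rw [← mul_assoc, ← ENNReal.ofReal_mul (mul_nonneg (pow_entry_nonneg B hB.1 n i p.1)
          (pow_entry_nonneg B hB.1 n k p.2))]
        ring_nf
      simp only [hterm]
      rw [← Finset.sum_mul, ← ENNReal.ofReal_sum_of_nonneg (fun p _ =>
        mul_nonneg (mul_nonneg (pow_entry_nonneg B hB.1 n i p.1) (hB.1 p.1 (w t)))
          (mul_nonneg (pow_entry_nonneg B hB.1 n k p.2) (hB.1 p.2 (v t))))]
      congr 2
      rw [Fintype.sum_prod_type]
      rw [pow_succ, Matrix.mul_apply, Matrix.mul_apply, Finset.sum_mul_sum]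


/-- The event that the chains stay apart up to time `n`. -/
def Dset (n : ℕ) : Set Ω := {ω | ∀ s ≤ n, X s ω ≠ Y s ω}

lemma measurable_Dset (hX : ∀ t i, MeasurableSet {ω | X t ω = i})
    (hY : ∀ t i, MeasurableSet {ω | Y t ω = i}) (n : ℕ) :
    MeasurableSet (Dset X Y n) := by
  have h1 : ∀ s : ℕ, MeasurableSet {ω : Ω | X s ω = Y s ω} := by
    intro s
    have : {ω : Ω | X s ω = Y s ω} = ⋃ i : Fin N, ({ω | X s ω = i} ∩ {ω | Y s ω = i}) := by
      ext ω; simp only [Set.mem_setOf_eq, Set.mem_iUnion, Set.mem_inter_iff]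
      constructor
      · intro h; exact ⟨Y s ω, h, rfl⟩
      · rintro ⟨i, h1, h2⟩; rw [h1, h2]
    rw [this]
    exact MeasurableSet.iUnion fun i => (hX s i).inter (hY s i)
  have : Dset X Y n = ⋂ (s : ℕ) (_ : s ≤ n), {ω : Ω | X s ω = Y s ω}ᶜ := by
    ext ω; simp [Dset]
  rw [this]
  exact MeasurableSet.iInter fun s => MeasurableSet.iInter fun _ => (h1 s).compl

lemma Dset_antitone {n n' : ℕ} (h : n ≤ n') : Dset X Y n' ⊆ Dset X Y n :=
  fun ω hω s hs => hω s (le_trans hs h)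

variable {X Y}

/-- Key lower bound: from anywhere off the diagonal, the pair hits `(i₀,i₀)` after
`m` more steps with probability at least `δ²`. -/
lemma hit_lower {B : Matrix (Fin N) (Fin N) ℝ} (hB : IsTransMat B) (μ : Measure Ω)
    (hchain : IsPairChain B μ X Y)
    (hX : ∀ t i, MeasurableSet {ω | X t ω = i})
    (hY : ∀ t i, MeasurableSet {ω | Y t ω = i})
    (m : ℕ) (i₀ : Fin N) (δ : ℝ) (hδ0 : 0 ≤ δ) (hδ : ∀ j, δ ≤ (B ^ m) i₀ j) (n : ℕ) :
    ENNReal.ofReal (δ * δ) * μ (Dset X Y n) ≤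
      μ ({ω | X (n+m) ω = i₀ ∧ Y (n+m) ω = i₀} ∩ Dset X Y n) := by
  classical
  set E : Set Ω := {ω | X (n+m) ω = i₀ ∧ Y (n+m) ω = i₀} with hE
  -- the finite set of good paths
  set P : Finset (Fin (n+1) → Fin N × Fin N) :=
    Finset.univ.filter (fun p => ∀ s, (p s).1 ≠ (p s).2) with hP
  set wp : (Fin (n+1) → Fin N × Fin N) → ℕ → Fin N :=
    fun p s => (p ⟨min s n, Nat.lt_succ_of_le (min_le_right s n)⟩).1 with hwp
  set vp : (Fin (n+1) → Fin N × Fin N) → ℕ → Fin N :=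
    fun p s => (p ⟨min s n, Nat.lt_succ_of_le (min_le_right s n)⟩).2 with hvp
  have hweq : ∀ p (s : ℕ) (hs : s ≤ n), wp p s = (p ⟨s, Nat.lt_succ_of_le hs⟩).1 := by
    intro p s hs
    simp only [hwp]
    congr 2
    exact Fin.ext (min_eq_left hs)
  have hveq : ∀ p (s : ℕ) (hs : s ≤ n), vp p s = (p ⟨s, Nat.lt_succ_of_le hs⟩).2 := by
    intro p s hs
    simp only [hvp]
    congr 2
    exact Fin.ext (min_eq_left hs)
  have hdecomp : Dset X Y n = ⋃ p ∈ P, cyl X Y (wp p) (vp p) n := by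
    ext ω
    simp only [Set.mem_iUnion, Dset, Set.mem_setOf_eq]
    constructor
    · intro h
      refine ⟨fun s => (X s ω, Y s ω), ?_, ?_⟩
      · simp only [hP, Finset.mem_filter, Finset.mem_univ, true_and]
        intro s
        exact h s (Nat.lt_succ_iff.mp s.2)
      · intro s hs
        rw [hweq (fun s : Fin (n+1) => (X s ω, Y s ω)) s hs,
          hveq (fun s : Fin (n+1) => (X s ω, Y s ω)) s hs]
        exact ⟨rfl, rfl⟩
    · rintro ⟨p, hp, hc⟩ s hs
      simp only [hP, Finset.mem_filter, Finset.mem_univ, true_and] at hp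
      have := hc s hs
      rw [hweq _ s hs, hveq _ s hs] at this
      rw [this.1, this.2]
      exact hp _
  have hdisjP : Set.PairwiseDisjoint ↑P (fun p => cyl X Y (wp p) (vp p) n) := by
    intro p _ q _ hpq
    rw [Function.onFun, Set.disjoint_left]
    intro ω h1 h2
    apply hpq
    funext s
    have e1 := h1 s.1 (Nat.lt_succ_iff.mp s.2)
    have e2 := h2 s.1 (Nat.lt_succ_iff.mp s.2)
    rw [hweq _ _ (Nat.lt_succ_iff.mp s.2), hveq _ _ (Nat.lt_succ_iff.mp s.2)] at e1 e2
    have : (⟨s.1, Nat.lt_succ_of_le (Nat.lt_succ_iff.mp s.2)⟩ : Fin (n+1)) = s := Fin.ext rfl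
    rw [this] at e1 e2
    ext
    · rw [← e1.1, ← e2.1]
    · rw [← e1.2, ← e2.2]
  have hcylmeas : ∀ p : Fin (n+1) → Fin N × Fin N, MeasurableSet (cyl X Y (wp p) (vp p) n) :=
    fun p => measurable_cyl X Y hX hY _ _ _
  have hmD : μ (Dset X Y n) = ∑ p ∈ P, μ (cyl X Y (wp p) (vp p) n) := by
    rw [hdecomp]
    exact measure_biUnion_finset hdisjP fun p _ => hcylmeas p
  have hmED : μ (E ∩ Dset X Y n) = ∑ p ∈ P, μ (E ∩ cyl X Y (wp p) (vp p) n) := by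
    rw [hdecomp, Set.inter_iUnion₂]
    apply measure_biUnion_finset
    · intro p hp q hq hpq
      exact Disjoint.mono (Set.inter_subset_right) (Set.inter_subset_right)
        (hdisjP hp hq hpq)
    · intro p _
      have hmE : MeasurableSet E := by
        have : E = {ω : Ω | X (n+m) ω = i₀} ∩ {ω | Y (n+m) ω = i₀} := by
          ext ω; simp [hE]
        rw [this]; exact (hX _ _).inter (hY _ _)
      exact hmE.inter (hcylmeas p)
  rw [hmD, hmED, Finset.mul_sum]
  apply Finset.sum_le_sum
  intro p _
  have hns := nstep X Y hB μ hchain hX hY m n (wp p) (vp p) i₀ i₀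
  rw [hE]
  rw [hns]
  apply mul_le_mul_left
  apply ENNReal.ofReal_le_ofReal
  exact mul_le_mul (hδ _) (hδ _) hδ0 (pow_entry_nonneg B hB.1 m i₀ _)

/-- One decay step. -/
lemma Dset_decay {B : Matrix (Fin N) (Fin N) ℝ} (hB : IsTransMat B) (μ : Measure Ω)
    [IsProbabilityMeasure μ] (hchain : IsPairChain B μ X Y)
    (hX : ∀ t i, MeasurableSet {ω | X t ω = i})
    (hY : ∀ t i, MeasurableSet {ω | Y t ω = i})
    (m : ℕ) (hm : 1 ≤ m) (i₀ : Fin N) (δ : ℝ) (hδ0 : 0 ≤ δ) (hδ1 : δ ≤ 1)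
    (hδ : ∀ j, δ ≤ (B ^ m) i₀ j) (n : ℕ) :
    μ (Dset X Y (n + m)) ≤ ENNReal.ofReal (1 - δ * δ) * μ (Dset X Y n) := by
  set E : Set Ω := {ω | X (n+m) ω = i₀ ∧ Y (n+m) ω = i₀} with hE
  have hmE : MeasurableSet E := by
    have : E = {ω : Ω | X (n+m) ω = i₀} ∩ {ω | Y (n+m) ω = i₀} := by
      ext ω; simp [hE]
    rw [this]; exact (hX _ _).inter (hY _ _)
  have hsub : Dset X Y (n + m) ⊆ Dset X Y n \ E := by
    intro ω hω
    refine ⟨Dset_antitone X Y (Nat.le_add_right n m) hω, ?_⟩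
    rintro ⟨hx, hy⟩
    exact hω (n+m) le_rfl (hx.trans hy.symm)
  have hsum : μ (Dset X Y n ∩ E) + μ (Dset X Y n \ E) = μ (Dset X Y n) :=
    measure_inter_add_diff _ hmE
  have hlow : ENNReal.ofReal (δ * δ) * μ (Dset X Y n) ≤ μ (Dset X Y n ∩ E) := by
    rw [Set.inter_comm]
    exact hit_lower hB μ hchain hX hY m i₀ δ hδ0 hδ n
  have h1 : μ (Dset X Y (n+m)) ≤ μ (Dset X Y n) - ENNReal.ofReal (δ * δ) * μ (Dset X Y n) := by
    apply ENNReal.le_sub_of_add_le_right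
      (ENNReal.mul_ne_top ENNReal.ofReal_ne_top (measure_ne_top μ _))
    calc μ (Dset X Y (n+m)) + ENNReal.ofReal (δ * δ) * μ (Dset X Y n)
        ≤ μ (Dset X Y n \ E) + μ (Dset X Y n ∩ E) :=
          add_le_add (measure_mono hsub) hlow
      _ = μ (Dset X Y n) := by rw [add_comm]; exact hsum
  refine le_trans h1 ?_
  rw [tsub_le_iff_right]
  rw [← add_mul, ← ENNReal.ofReal_add (by nlinarith) (by nlinarith)]
  rw [show 1 - δ * δ + δ * δ = 1 by ring]
  simp



lemma Dset_pow_bound {B : Matrix (Fin N) (Fin N) ℝ} (hB : IsTransMat B) (μ : Measure Ω)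
    [IsProbabilityMeasure μ] (hchain : IsPairChain B μ X Y)
    (hX : ∀ t i, MeasurableSet {ω | X t ω = i})
    (hY : ∀ t i, MeasurableSet {ω | Y t ω = i})
    (m : ℕ) (hm : 1 ≤ m) (i₀ : Fin N) (δ : ℝ) (hδ0 : 0 ≤ δ) (hδ1 : δ ≤ 1)
    (hδ : ∀ j, δ ≤ (B ^ m) i₀ j) (k : ℕ) :
    μ (Dset X Y (k * m)) ≤ ENNReal.ofReal (1 - δ * δ) ^ k := by
  induction k with
  | zero => simpa using prob_le_one
  | succ k ih =>
      have hkm : (k+1) * m = k*m + m := by ring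
      rw [hkm]
      calc μ (Dset X Y (k*m + m))
          ≤ ENNReal.ofReal (1 - δ * δ) * μ (Dset X Y (k*m)) :=
            Dset_decay hB μ hchain hX hY m hm i₀ δ hδ0 hδ1 hδ (k*m)
        _ ≤ ENNReal.ofReal (1 - δ * δ) * ENNReal.ofReal (1 - δ * δ) ^ k :=
            mul_le_mul_right ih _
        _ = ENNReal.ofReal (1 - δ * δ) ^ (k+1) := by rw [pow_succ, mul_comm]

lemma meetTime_eq_find (ω : Ω) (h : ∃ t, X t ω = Y t ω) :
    meetTime X Y 0 ω = (Nat.find h : ℕ∞) := by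
  apply le_antisymm
  · exact sInf_le ⟨Nat.find h, rfl, Nat.zero_le _, Nat.find_spec h⟩
  · apply le_sInf
    rintro n ⟨t, rfl, -, ht⟩
    exact_mod_cast Nat.find_min' h ht

lemma pointwise_bound (β : ℝ) (hβ : 0 ≤ β) (ω : Ω) (h : ∃ t, X t ω = Y t ω) :
    expVal β (meetTime X Y 0 ω) ≤
      1 + ∑' n : ℕ, Set.indicator (Dset X Y n)
        (fun _ => ENNReal.ofReal (Real.exp (β * (n+1 : ℕ)) - Real.exp (β * n))) ω := by
  classical
  set F : ℕ → ℝ := fun n => Real.exp (β * n) with hF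
  set t₀ := Nat.find h with ht₀
  have hmem : ∀ n : ℕ, (ω ∈ Dset X Y n ↔ n < t₀) := by
    intro n
    rw [ht₀, Nat.lt_find_iff]
    exact ⟨fun hω m hm => hω m hm, fun hω s hs => hω s hs⟩
  have hFnn : ∀ n : ℕ, 0 ≤ F (n+1) - F n := by
    intro n
    apply sub_nonneg.mpr
    apply Real.exp_le_exp.mpr
    have : ((n:ℝ)) ≤ ((n+1 : ℕ):ℝ) := by push_cast; linarith
    nlinarith
  have hsum : ∑' n : ℕ, Set.indicator (Dset X Y n)
      (fun _ => ENNReal.ofReal (F (n+1) - F n)) ω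
      = ∑ n ∈ Finset.range t₀, ENNReal.ofReal (F (n+1) - F n) := by
    rw [tsum_eq_sum (s := Finset.range t₀) ?_]
    · apply Finset.sum_congr rfl
      intro n hn
      rw [Set.indicator_apply, if_pos ((hmem n).mpr (Finset.mem_range.mp hn))]
    · intro n hn
      rw [Set.indicator_apply, if_neg]
      intro hmemn
      exact hn (Finset.mem_range.mpr ((hmem n).mp hmemn))
  have hts : ∑ n ∈ Finset.range t₀, ENNReal.ofReal (F (n+1) - F n)
      = ENNReal.ofReal (F t₀ - 1) := by
    rw [← ENNReal.ofReal_sum_of_nonneg (fun n _ => hFnn n), Finset.sum_range_sub F t₀]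
    congr 1
    simp [hF]
  have hmt : meetTime X Y 0 ω = (t₀ : ℕ∞) := meetTime_eq_find ω h
  have hexpv : expVal β (meetTime X Y 0 ω) = ENNReal.ofReal (F t₀) := by
    rw [hmt]; rfl
  rw [hexpv, hsum, hts]
  have h1F : (1:ℝ) ≤ F t₀ := Real.one_le_exp (by positivity)
  rw [show (1 : ℝ≥0∞) = ENNReal.ofReal 1 by simp, ← ENNReal.ofReal_add zero_le_one (by linarith)]
  apply ENNReal.ofReal_le_ofReal
  linarith

end chain


/-- **Exponential moments of meeting times, uniformly in the perturbation.** -/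
theorem meeting_time_exponential_moments {N : ℕ}
    (A : Matrix (Fin N) (Fin N) ℝ) (hA : IsTransMat A) (hAerg : UniformlyErgodic A)
    (γ : ℝ) (hγ : γ ∈ Set.Ioo (0 : ℝ) 1) :
    ∀ ε : ℝ, 0 < ε → ∃ βt : ℝ, 0 < βt ∧
      ∀ B : Matrix (Fin N) (Fin N) ℝ, IsTransMat B → (∀ i j, γ * A i j ≤ B i j) →
        ∀ (Ω : Type) [MeasurableSpace Ω]
          (μ : Fin N → Fin N → Measure Ω) (X Y : ℕ → Ω → Fin N),
          (∀ x y, IsProbabilityMeasure (μ x y)) →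
          (∀ (t : ℕ) (i : Fin N), MeasurableSet {ω | X t ω = i}) →
          (∀ (t : ℕ) (i : Fin N), MeasurableSet {ω | Y t ω = i}) →
          (∀ x y, μ x y {ω | X 0 ω = x ∧ Y 0 ω = y} = 1) →
          (∀ x y, IsPairChain B (μ x y) X Y) →
          ∀ β : ℝ, 0 ≤ β → β ≤ βt → ∀ x y : Fin N,
            ∫⁻ ω, expVal β (meetTime X Y 0 ω) ∂(μ x y) ≤ ENNReal.ofReal (1 + ε) := by
  intro ε hε
  obtain ⟨m, i₀, c, hm1, hc0, hc1, hcol⟩ := exists_pos_column A hA hAerg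
  obtain ⟨hγ0, hγ1⟩ := hγ
  set δ : ℝ := γ ^ m * c with hδdef
  have hδ0 : 0 < δ := by positivity
  have hγm1 : γ ^ m < 1 := pow_lt_one₀ hγ0.le hγ1 (by omega)
  have hδ1 : δ < 1 := by nlinarith
  set q : ℝ := 1 - δ * δ with hqdef
  have hq0 : 0 < q := by nlinarith
  have hq1 : q < 1 := by nlinarith
  have hqne : q ≠ 0 := ne_of_gt hq0
  set θ : ℝ := q ^ ((1:ℝ)/m) with hθdef
  have hθ0 : 0 < θ := Real.rpow_pos_of_pos hq0 _
  have hθ1 : θ < 1 := Real.rpow_lt_one hq0.le hq1 (by positivity)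
  have hθm : θ ^ m = q := by
    rw [hθdef, ← Real.rpow_natCast (q ^ ((1:ℝ)/m)) m, ← Real.rpow_mul hq0.le]
    rw [one_div, inv_mul_cancel₀ (Nat.cast_ne_zero.mpr (by omega))]
    exact Real.rpow_one q
  have hθne : (1:ℝ) - θ ≠ 0 := by linarith
  set b1 : ℝ := Real.log ((1+θ)/(2*θ)) with hb1def
  set b2 : ℝ := Real.log (1 + ε*q*(1-θ)/2) with hb2def
  have hb1 : 0 < b1 := Real.log_pos (by rw [lt_div_iff₀ (by positivity)]; linarith)
  have hb2 : 0 < b2 := Real.log_pos (by nlinarith [mul_pos (mul_pos hε hq0) (show (0:ℝ) < 1-θ by linarith)])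
  refine ⟨min b1 b2, lt_min hb1 hb2, ?_⟩
  intro B hB hgB Ω _inst μ X Y hprob hX hY hinit hchain β hβ0 hββ x y
  haveI := hprob x y
  set u : ℝ := Real.exp β with hu
  have hu1 : 1 ≤ u := Real.one_le_exp hβ0
  have hub1 : u ≤ (1+θ)/(2*θ) := by
    rw [hu, ← Real.exp_log (show (0:ℝ) < (1+θ)/(2*θ) by positivity)]
    exact Real.exp_le_exp.mpr (le_trans hββ (min_le_left _ _))
  have hub2 : u ≤ 1 + ε*q*(1-θ)/2 := by
    rw [hu, ← Real.exp_log (show (0:ℝ) < 1 + ε*q*(1-θ)/2 by nlinarith [mul_pos (mul_pos hε hq0) (show (0:ℝ) < 1-θ by linarith)])]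
    exact Real.exp_le_exp.mpr (le_trans hββ (min_le_right _ _))
  have huθ : u * θ ≤ (1+θ)/2 := by
    calc u * θ ≤ ((1+θ)/(2*θ)) * θ := mul_le_mul_of_nonneg_right hub1 hθ0.le
      _ = (1+θ)/2 := by field_simp
  have h1uθ : (1-θ)/2 ≤ 1 - u*θ := by linarith
  have h1uθ0 : 0 < 1 - u*θ := by linarith
  -- the transition lower bound for B^m
  have hBm : ∀ j, δ ≤ (B ^ m) i₀ j := by
    intro j
    have h1 := pow_entry_ge A B γ hγ0.le hA.1 hB.1 hgB m i₀ j
    have h2 : γ ^ m * c ≤ γ ^ m * (A ^ m) i₀ j :=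
      mul_le_mul_of_nonneg_left (hcol j) (by positivity)
    linarith
  -- decay of the separation events
  have hDn : ∀ n : ℕ, μ x y (Dset X Y n) ≤ ENNReal.ofReal (q⁻¹ * θ ^ n) := by
    intro n
    have h1 : μ x y (Dset X Y n) ≤ μ x y (Dset X Y (n / m * m)) :=
      measure_mono (Dset_antitone X Y (Nat.div_mul_le_self n m))
    have h2 := Dset_pow_bound hB (μ x y) (hchain x y) hX hY m hm1 i₀ δ
      hδ0.le hδ1.le hBm (n / m)
    have h3 : ENNReal.ofReal (1 - δ * δ) ^ (n/m) = ENNReal.ofReal (q ^ (n/m)) := by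
      rw [ENNReal.ofReal_pow hq0.le]
    have h4 : q ^ (n/m) ≤ q⁻¹ * θ ^ n := by
      have e1 : q ^ (n/m) = q⁻¹ * q ^ (n/m + 1) := by
        rw [pow_succ, mul_comm (q ^ (n/m)) q, ← mul_assoc, inv_mul_cancel₀ hqne, one_mul]
      have e2 : q ^ (n/m + 1) = θ ^ (m * (n/m + 1)) := by
        rw [pow_mul, hθm]
      have e3 : θ ^ (m * (n/m + 1)) ≤ θ ^ n :=
        pow_le_pow_of_le_one hθ0.le hθ1.le (Nat.lt_mul_div_succ n (by omega)).le
      calc q ^ (n/m) = q⁻¹ * θ ^ (m * (n/m+1)) := by rw [e1, e2]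
        _ ≤ q⁻¹ * θ ^ n := mul_le_mul_of_nonneg_left e3 (by positivity)
    calc μ x y (Dset X Y n) ≤ ENNReal.ofReal (q ^ (n/m)) := by
          rw [← h3]; exact le_trans h1 h2
      _ ≤ ENNReal.ofReal (q⁻¹ * θ ^ n) := ENNReal.ofReal_le_ofReal h4
  -- the chains meet almost surely
  have hnull : μ x y {ω | ¬ ∃ t, X t ω = Y t ω} = 0 := by
    have hbd : ∀ k : ℕ, μ x y {ω | ¬ ∃ t, X t ω = Y t ω} ≤ ENNReal.ofReal (q ^ k) := by
      intro k
      calc μ x y {ω | ¬ ∃ t, X t ω = Y t ω} ≤ μ x y (Dset X Y (k*m)) := by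
            apply measure_mono
            intro ω hω s _
            exact fun hxy => hω ⟨s, hxy⟩
        _ ≤ ENNReal.ofReal (1-δ*δ) ^ k :=
            Dset_pow_bound hB (μ x y) (hchain x y) hX hY m hm1 i₀ δ hδ0.le hδ1.le hBm k
        _ = ENNReal.ofReal (q ^ k) := by rw [ENNReal.ofReal_pow hq0.le]
    have htend : Filter.Tendsto (fun k : ℕ => ENNReal.ofReal (q ^ k))
        Filter.atTop (nhds 0) := by
      rw [show (0:ℝ≥0∞) = ENNReal.ofReal 0 by simp]
      exact (ENNReal.continuous_ofReal.tendsto 0).comp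
        (tendsto_pow_atTop_nhds_zero_of_lt_one hq0.le hq1)
    have := le_of_tendsto_of_tendsto (tendsto_const_nhds
      (x := μ x y {ω | ¬ ∃ t, X t ω = Y t ω}) (f := Filter.atTop (α := ℕ))) htend
      (Filter.Eventually.of_forall hbd)
    exact le_antisymm (by simpa using this) zero_le
  -- a.e. pointwise bound
  set g : Ω → ℝ≥0∞ := fun ω => 1 + ∑' n : ℕ, Set.indicator (Dset X Y n)
      (fun _ => ENNReal.ofReal (Real.exp (β * (n+1 : ℕ)) - Real.exp (β * n))) ω with hg
  have hae : ∀ᵐ ω ∂(μ x y), expVal β (meetTime X Y 0 ω) ≤ g ω := by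
    rw [Filter.eventually_iff, mem_ae_iff]
    apply measure_mono_null _ hnull
    intro ω hω
    simp only [Set.mem_compl_iff, Set.mem_setOf_eq] at hω ⊢
    intro hex
    exact hω (pointwise_bound β hβ0 ω hex)
  have hint : ∫⁻ ω, expVal β (meetTime X Y 0 ω) ∂(μ x y) ≤ ∫⁻ ω, g ω ∂(μ x y) :=
    lintegral_mono_ae hae
  have hgval : ∫⁻ ω, g ω ∂(μ x y) = 1 + ∑' n : ℕ,
      ENNReal.ofReal (Real.exp (β * (n+1 : ℕ)) - Real.exp (β * n)) * μ x y (Dset X Y n) := by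
    rw [hg]
    rw [lintegral_add_left measurable_const]
    rw [lintegral_one, measure_univ]
    congr 1
    rw [lintegral_tsum (fun n =>
      (measurable_const.indicator (measurable_Dset X Y hX hY n)).aemeasurable)]
    exact tsum_congr fun n => lintegral_indicator_const (measurable_Dset X Y hX hY n) _
  have hsumbound : ∑' n : ℕ,
      ENNReal.ofReal (Real.exp (β * (n+1 : ℕ)) - Real.exp (β * n)) * μ x y (Dset X Y n)
      ≤ ENNReal.ofReal ε := by
    have hterm : ∀ n : ℕ,
        ENNReal.ofReal (Real.exp (β * (n+1 : ℕ)) - Real.exp (β * n)) * μ x y (Dset X Y n)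
        ≤ ENNReal.ofReal ((u - 1) * q⁻¹) * ENNReal.ofReal (u * θ) ^ n := by
      intro n
      have hexpn : Real.exp (β * n) = u ^ n := by
        rw [hu, ← Real.exp_nat_mul]; ring_nf
      have e1 : Real.exp (β * (n+1 : ℕ)) - Real.exp (β * n) = (u - 1) * u^n := by
        push_cast
        rw [mul_add, mul_one, Real.exp_add, hexpn]
        ring
      calc ENNReal.ofReal (Real.exp (β * (n+1 : ℕ)) - Real.exp (β * n)) * μ x y (Dset X Y n)
          ≤ ENNReal.ofReal ((u-1) * u^n) * ENNReal.ofReal (q⁻¹ * θ^n) := by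
            rw [e1]; exact mul_le_mul_right (hDn n) _
        _ = ENNReal.ofReal ((u-1) * q⁻¹ * (u*θ)^n) := by
            rw [← ENNReal.ofReal_mul (mul_nonneg (by linarith) (pow_nonneg (by linarith) n))]
            congr 1
            rw [mul_pow]
            ring
        _ = ENNReal.ofReal ((u - 1) * q⁻¹) * ENNReal.ofReal (u * θ) ^ n := by
            rw [ENNReal.ofReal_mul (mul_nonneg (by linarith) (inv_nonneg.mpr hq0.le)),
              ENNReal.ofReal_pow (mul_nonneg (by linarith) hθ0.le)]
    calc ∑' n : ℕ, ENNReal.ofReal (Real.exp (β * (n+1 : ℕ)) - Real.exp (β * n))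
          * μ x y (Dset X Y n)
        ≤ ∑' n : ℕ, ENNReal.ofReal ((u - 1) * q⁻¹) * ENNReal.ofReal (u * θ) ^ n :=
          ENNReal.tsum_le_tsum hterm
      _ = ENNReal.ofReal ((u - 1) * q⁻¹) * ∑' n : ℕ, ENNReal.ofReal (u * θ) ^ n :=
          ENNReal.tsum_mul_left
      _ = ENNReal.ofReal ((u - 1) * q⁻¹) * (1 - ENNReal.ofReal (u * θ))⁻¹ := by
          rw [ENNReal.tsum_geometric]
      _ = ENNReal.ofReal ((u - 1) * q⁻¹) * ENNReal.ofReal ((1 - u*θ)⁻¹) := by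
          congr 1
          rw [ENNReal.ofReal_inv_of_pos h1uθ0]
          congr 1
          rw [ENNReal.ofReal_sub 1 (mul_nonneg (by linarith) hθ0.le)]
          simp
      _ = ENNReal.ofReal ((u - 1) * q⁻¹ * (1 - u*θ)⁻¹) := by
          rw [← ENNReal.ofReal_mul (mul_nonneg (by linarith) (inv_nonneg.mpr hq0.le))]
      _ ≤ ENNReal.ofReal ε := by
          apply ENNReal.ofReal_le_ofReal
          have hA1 : (1 - u*θ)⁻¹ ≤ ((1-θ)/2)⁻¹ :=
            inv_anti₀ (by linarith) h1uθ
          calc (u-1) * q⁻¹ * (1-u*θ)⁻¹ ≤ (u-1) * q⁻¹ * ((1-θ)/2)⁻¹ := by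
                apply mul_le_mul_of_nonneg_left hA1
                  (mul_nonneg (by linarith) (inv_nonneg.mpr hq0.le))
            _ ≤ (ε*q*(1-θ)/2) * q⁻¹ * ((1-θ)/2)⁻¹ := by
                apply mul_le_mul_of_nonneg_right
                  (mul_le_mul_of_nonneg_right (by linarith) (inv_nonneg.mpr hq0.le))
                  (inv_nonneg.mpr (by linarith))
            _ = ε := by field_simp
  calc ∫⁻ ω, expVal β (meetTime X Y 0 ω) ∂(μ x y) ≤ ∫⁻ ω, g ω ∂(μ x y) := hint
    _ = 1 + ∑' n : ℕ, ENNReal.ofReal (Real.exp (β * (n+1 : ℕ)) - Real.exp (β * n))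
          * μ x y (Dset X Y n) := hgval
    _ ≤ 1 + ENNReal.ofReal ε := add_le_add_right hsumbound 1
    _ = ENNReal.ofReal (1+ε) := by rw [ENNReal.ofReal_add zero_le_one hε.le]; simp
end DiscreteEBSDE
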